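/- Let Σ = {a,b}, W_1,…,W_k nonempty subsets of {aa, bb}, and define for each j the string w_j by: w_j = aa if W_j = {aa}, w_j = abba if W_j = {bb}, and w_j = aabba if W_j = {aa, bb}. Let w = w_1 (bab) w_2 (bab) ⋯ (bab) w_k, and let gc be the tuple of constraints requiring, for a length-2k subsequence, zero gap between positions 2j−1 and 2j and gap length in [3,9] between positions 2j and 2j+1. Then the set of gc-subsequences p of w with p[2j−1]p[2j] ∈ {aa, bb} for every j ∈ [k] equals W_1 · W_2 ⋯ W_k. -/

import Mathlib

namespace Aux
variable {α : Type*}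

def psum (cs : List (List α)) (j : ℕ) : ℕ :=
  ((cs.take j).map List.length).sum

@[simp] lemma psum_zero (cs : List (List α)) : psum cs 0 = 0 := rfl

lemma psum_cons_succ (c : List α) (cs : List (List α)) (j : ℕ) :
    psum (c :: cs) (j+1) = c.length + psum cs j := by
  simp [psum]

lemma psum_succ (cs : List (List α)) (j : ℕ) (hj : j < cs.length) :
    psum cs (j+1) = psum cs j + cs[j].length := by
  induction cs generalizing j with
  | nil => simp at hj
  | cons c cs ih =>
    cases j with
    | zero => simp [psum_cons_succ, psum]
    | succ j =>
      rw [psum_cons_succ, psum_cons_succ, ih _ (by simpa using hj)]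
      simp [Nat.add_assoc]

lemma psum_length (cs : List (List α)) : psum cs cs.length = cs.flatten.length := by
  simp [psum, List.length_flatten]

lemma psum_mono (cs : List (List α)) {i j : ℕ} (h : i ≤ j) : psum cs i ≤ psum cs j := by
  unfold psum
  exact List.Sublist.sum_le_sum (by
    exact (List.take_sublist_take_left h).map _) (by simp)

lemma drop_psum (cs : List (List α)) (j : ℕ) :
    cs.flatten.drop (psum cs j) = (cs.drop j).flatten := by
  induction cs generalizing j with
  | nil => simp [psum]
  | cons c cs ih =>
    cases j with
    | zero => simp
    | succ j =>
      rw [psum_cons_succ, List.flatten_cons, List.drop_append]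
      simp [ih]

lemma drop_psum' (cs : List (List α)) (j : ℕ) (hj : j < cs.length) :
    cs.flatten.drop (psum cs j) = cs[j] ++ (cs.drop (j+1)).flatten := by
  rw [drop_psum, List.drop_eq_getElem_cons hj, List.flatten_cons]

lemma getElem_psum (cs : List (List α)) (j : ℕ) (hj : j < cs.length) (t : ℕ)
    (ht : t < cs[j].length) (h2 : psum cs j + t < cs.flatten.length) :
    cs.flatten[psum cs j + t] = cs[j][t] := by
  have hd := drop_psum' cs j hj
  have hlen : cs.flatten.length - psum cs j = cs[j].length + (cs.drop (j+1)).flatten.length := by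
    rw [← List.length_drop, hd]; simp
  have h3 : cs.flatten[psum cs j + t] = (cs.flatten.drop (psum cs j))[t]'(by
      rw [List.length_drop, hlen]; omega) := by
    rw [List.getElem_drop]
  rw [h3]
  simp only [hd]
  rw [List.getElem_append_left ht]

lemma exists_decomp (cs : List (List α)) (i : ℕ) (hi : i < cs.flatten.length) :
    ∃ j, ∃ hj : j < cs.length, ∃ t, t < cs[j].length ∧ i = psum cs j + t := by
  induction cs generalizing i with
  | nil => simp at hi
  | cons c cs ih =>
    rcases Nat.lt_or_ge i c.length with h | h
    · exact ⟨0, by simp, i, by simpa using h, by simp⟩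
    · have hi' : i - c.length < cs.flatten.length := by
        simp [List.length_flatten] at hi ⊢
        simp [List.length_flatten] at *
        omega
      obtain ⟨j, hj, t, ht, he⟩ := ih (i - c.length) hi'
      exact ⟨j+1, by simpa using hj, t, by simpa using ht, by
        rw [psum_cons_succ]; omega⟩

lemma intercalate_cons₂ (sep a b : List α) (l : List (List α)) :
    List.intercalate sep (a :: b :: l) = a ++ sep ++ List.intercalate sep (b :: l) := by
  simp [List.intercalate, List.intersperse]

lemma flatten_map_append_sep (sep : List α) :
    ∀ (l : List (List α)), l ≠ [] →
      (l.map (· ++ sep)).flatten = List.intercalate sep l ++ sep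
  | [], h => absurd rfl h
  | [a], _ => by simp [List.intercalate]
  | a :: b :: l, _ => by
    have ih := flatten_map_append_sep sep (b :: l) (by simp)
    rw [intercalate_cons₂]
    simp only [List.map_cons, List.flatten_cons] at ih ⊢
    rw [ih]
    simp [List.append_assoc]

lemma getElem_idx_congr (l : List α) {i j : ℕ} (h : i = j) (hj : j < l.length) :
    l[i]'(h ▸ hj) = l[j]'hj := by subst h; rfl

lemma take2_drop (l : List α) (n : ℕ) (h : n + 1 < l.length) :
    (l.drop n).take 2 = [l[n], l[n+1]] := by
  have h1 : l.drop n = l[n] :: l.drop (n+1) := List.drop_eq_getElem_cons (by omega)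
  have h2 : l.drop (n+1) = l[n+1] :: l.drop (n+2) := List.drop_eq_getElem_cons h
  rw [h1, h2]
  rfl

lemma psum_ofFn_two {k : ℕ} (u : Fin k → List α) (h2 : ∀ j, (u j).length = 2) :
    ∀ m, m ≤ k → psum (List.ofFn u) m = 2 * m := by
  intro m
  induction m with
  | zero => simp
  | succ m ih =>
    intro hm
    rw [psum_succ _ _ (by simpa using hm), ih (by omega)]
    simp [h2]
    omega

lemma length_flatten_ofFn_two {k : ℕ} (u : Fin k → List α) (h2 : ∀ j, (u j).length = 2) :
    (List.ofFn u).flatten.length = 2 * k := by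
  rw [← psum_length, List.length_ofFn, psum_ofFn_two u h2 k le_rfl]

lemma getElem_flatten_ofFn_two {k : ℕ} (u : Fin k → List α) (h2 : ∀ j, (u j).length = 2)
    (m r : ℕ) (hm : m < k) (hr : r < 2)
    (hidx : 2*m + r < (List.ofFn u).flatten.length) :
    (List.ofFn u).flatten[2*m+r] = (u ⟨m, hm⟩)[r]'(by rw [h2]; exact hr) := by
  have hd := drop_psum' (List.ofFn u) m (by simpa using hm)
  rw [psum_ofFn_two u h2 m (by omega)] at hd
  have h3 : (List.ofFn u).flatten[2*m+r] =
      ((List.ofFn u).flatten.drop (2*m))[r]'(by rw [List.length_drop]; omega) := by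
    rw [List.getElem_drop]
  rw [h3]
  simp only [hd]
  rw [List.getElem_append_left (by simp [h2]; omega)]
  simp

end Aux


/-- `p` is a subsequence of `v` via an embedding whose `i`-th gap length lies between
`lo i` and `hi i`. -/
def IsLenSubseq {α : Type*} (v p : List α) (lo hi : ℕ → ℕ) : Prop :=
  ∃ e : ℕ → ℕ,
    (∀ i j, i < j → j < p.length → e i < e j) ∧
    (∀ i, i < p.length → e i < v.length) ∧
    (∀ i, i < p.length → v[e i]? = p[i]?) ∧
    (∀ i, i + 1 < p.length →
      lo i ≤ e (i + 1) - (e i + 1) ∧ e (i + 1) - (e i + 1) ≤ hi i)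

set_option maxHeartbeats 2000000 in
open Aux in
/-- Σ = {a, b} is modelled as `Bool` with `a = false`, `b = true`; so `aa = [false,false]`,
`bb = [true,true]`, `abba = [false,true,true,false]`, `aabba = [false,false,true,true,false]`
and the separator `bab = [true,false,true]`. With `w = w_1 bab w_2 bab ⋯ bab w_k` and the
constraints (zero gap inside each pair, gap in `[3,9]` between pairs), the length-`2k`
gc-subsequences `p` of `w` whose consecutive pairs all lie in `{aa, bb}` are exactly the
strings of `W_1 · W_2 ⋯ W_k`. -/
theorem stmt11 (k : ℕ) (hk : 1 ≤ k)
    (W : Fin k → Set (List Bool)) (ws : Fin k → List Bool)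
    (hws : ∀ j,
      (W j = {[false, false]} ∧ ws j = [false, false]) ∨
      (W j = {[true, true]} ∧ ws j = [false, true, true, false]) ∨
      (W j = ({[false, false], [true, true]} : Set (List Bool)) ∧
        ws j = [false, false, true, true, false])) :
    {p : List Bool | p.length = 2 * k ∧
        IsLenSubseq (List.intercalate [true, false, true] (List.ofFn ws)) p
          (fun i => if i % 2 = 0 then 0 else 3) (fun i => if i % 2 = 0 then 0 else 9) ∧
        ∀ j : Fin k, (p.drop (2 * (j : ℕ))).take 2 ∈
          ({[false, false], [true, true]} : Set (List Bool))} =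
      {p : List Bool | ∃ u : Fin k → List Bool,
        (∀ j, u j ∈ W j) ∧ p = (List.ofFn u).flatten} := by
  set sep : List Bool := [true, false, true] with hsepdef
  set w : List Bool := List.intercalate sep (List.ofFn ws) with hwdef
  set cs : List (List Bool) := (List.ofFn ws).map (· ++ sep) with hcsdef
  have hcsl : cs.length = k := by simp [hcsdef]
  have hget : ∀ (j : ℕ) (hj : j < k), cs[j]'(by omega) = ws ⟨j, hj⟩ ++ sep := by
    intro j hj; simp [hcsdef]
  have hflat : cs.flatten = w ++ sep := by
    rw [hcsdef, hwdef]
    exact Aux.flatten_map_append_sep sep _ (by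
      intro h; have := congrArg List.length h; simp at this; omega)
  have hflen : cs.flatten.length = w.length + 3 := by rw [hflat]; simp [hsepdef]
  have hlenw : Aux.psum cs k = w.length + 3 := by rw [← hcsl, Aux.psum_length, hflen]
  have hL : ∀ j : Fin k, 2 ≤ (ws j).length ∧ (ws j).length ≤ 5 := by
    intro j
    rcases hws j with ⟨_, h⟩ | ⟨_, h⟩ | ⟨_, h⟩ <;> rw [h] <;> simp
  have hssucc : ∀ (j : ℕ) (hj : j < k),
      Aux.psum cs (j+1) = Aux.psum cs j + (ws ⟨j, hj⟩).length + 3 := by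
    intro j hj
    rw [Aux.psum_succ cs j (by omega), hget j hj]
    simp [hsepdef]; omega
  have hblock : ∀ (j : ℕ) (hj : j < k),
      Aux.psum cs j + (ws ⟨j, hj⟩).length ≤ w.length := by
    intro j hj
    have h1 : Aux.psum cs (j+1) ≤ Aux.psum cs k := Aux.psum_mono cs (by omega)
    rw [hssucc j hj] at h1; omega
  have hchunk : ∀ (j : ℕ) (hj : j < k) (t : ℕ) (ht : t < (ws ⟨j, hj⟩).length + 3)
      (h2 : Aux.psum cs j + t < w.length),
      w[Aux.psum cs j + t]'h2 =
        (ws ⟨j, hj⟩ ++ sep)[t]'(by simp [hsepdef]; omega) := by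
    intro j hj t ht h2
    have h3 := Aux.getElem_psum cs j (by omega) t
      (by rw [hget j hj]; simp [hsepdef]; omega) (by rw [hflen]; omega)
    have h4 : cs.flatten[Aux.psum cs j + t]'(by rw [hflen]; omega) =
        w[Aux.psum cs j + t]'h2 := by
      simp only [hflat]
      rw [List.getElem_append_left h2]
    rw [← h4, h3]
    exact List.getElem_of_eq (hget j hj) _
  have classify : ∀ (q : ℕ) (h2 : q + 1 < w.length),
      w[q]'(by omega) = w[q+1]'h2 →
      ∃ (j : ℕ) (hj : j < k) (t : ℕ), t ≤ 2 ∧ q = Aux.psum cs j + t ∧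
        ([w[q]'(by omega), w[q+1]'h2] : List Bool) ∈ W ⟨j, hj⟩ := by
    intro q h2 heq
    obtain ⟨j, hj', t, ht, hq⟩ := Aux.exists_decomp cs q (by rw [hflen]; omega)
    have hj : j < k := by omega
    rw [hget j hj] at ht
    have htlt : t < (ws ⟨j, hj⟩).length + 3 := by
      simpa [hsepdef] using ht
    rcases Nat.lt_or_ge (t+1) ((ws ⟨j, hj⟩).length + 3) with hti | hto
    · subst hq
      have e1 := hchunk j hj t (by omega) (by omega)
      have e2 : w[Aux.psum cs j + t + 1]'h2 =
          (ws ⟨j, hj⟩ ++ sep)[t+1]'(by simp [hsepdef]; omega) :=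
        hchunk j hj (t+1) hti h2
      refine ⟨j, hj, t, ?_, rfl, ?_⟩ <;>
      · rcases hws ⟨j, hj⟩ with ⟨hW, hwsj⟩ | ⟨hW, hwsj⟩ | ⟨hW, hwsj⟩ <;>
        simp only [hwsj, hsepdef, List.cons_append, List.nil_append, List.length_cons,
          List.length_nil] at e1 e2 hti <;>
        norm_num at hti <;>
        (have htb : t ≤ 6 := by omega) <;>
        interval_cases t <;>
        simp_all [hW]
    · exfalso
      have htv : t = (ws ⟨j, hj⟩).length + 2 := by omega
      have hj1 : j + 1 < k := by
        by_contra hcon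
        have : j + 1 = k := by omega
        have : q + 1 = Aux.psum cs k := by
          rw [← this, hssucc j hj]; omega
        omega
      have hq1 : q + 1 = Aux.psum cs (j+1) := by rw [hssucc j hj]; omega
      have e1 : w[q]'(by omega) = (ws ⟨j, hj⟩ ++ sep)[t]'(by simp [hsepdef]; omega) := by
        subst hq; exact hchunk j hj t (by omega) (by omega)
      have e1v : w[q]'(by omega) = true := by
        rw [e1, List.getElem_append_right (by omega)]
        have hsub : t - (ws ⟨j, hj⟩).length = 2 := by omega
        simp [hsepdef, hsub]
      have e3 := Aux.getElem_idx_congr w hq1 (by omega)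
      have e2 : w[Aux.psum cs (j+1)]'(by omega) =
          (ws ⟨j+1, hj1⟩ ++ sep)[0]'(by simp [hsepdef]) := by
        have := hchunk (j+1) hj1 0 (by have := hL ⟨j+1, hj1⟩; omega) (by omega)
        simpa using this
      have e2v : w[q+1]'h2 = false := by
        rw [e3, e2, List.getElem_append_left (by have := hL ⟨j+1, hj1⟩; omega)]
        rcases hws ⟨j+1, hj1⟩ with ⟨_, hwsj⟩ | ⟨_, hwsj⟩ | ⟨_, hwsj⟩ <;> simp [hwsj]
      rw [e1v, e2v] at heq
      exact Bool.noConfusion heq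
  ext p
  simp only [Set.mem_setOf_eq]
  constructor
  · rintro ⟨hplen, ⟨e, hmono, hbnd, hval, hgap⟩, hpairs⟩
    rw [hplen] at hbnd hval hgap hmono
    have epair : ∀ m, m < k → e (2*m+1) = e (2*m) + 1 := by
      intro m hm
      have h := (hgap (2*m) (by omega)).2
      have h0 : (2*m) % 2 = 0 := by omega
      simp only [h0, if_pos] at h
      have h2 := hmono (2*m) (2*m+1) (by omega) (by omega)
      omega
    have pget : ∀ i (hi : i < 2*k), w[e i]'(hbnd i hi) = p[i]'(by omega) := by
      intro i hi
      have h := hval i hi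
      rw [List.getElem?_eq_getElem (hbnd i hi), List.getElem?_eq_getElem (by omega)] at h
      simpa using h
    have H : ∀ m : Fin k, ∃ jj : Fin k, ∃ t, t ≤ 2 ∧
        e (2*(m:ℕ)) = Aux.psum cs (jj:ℕ) + t ∧ (p.drop (2*(m:ℕ))).take 2 ∈ W jj := by
      intro m
      have hm : (m:ℕ) < k := m.2
      have take2 := Aux.take2_drop p (2*(m:ℕ)) (by omega)
      have hmem := hpairs m
      rw [take2] at hmem
      have hpe : p[2*(m:ℕ)]'(by omega) = p[2*(m:ℕ)+1]'(by omega) := by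
        have hmem' := hmem
        simp only [Set.mem_insert_iff, Set.mem_singleton_iff, List.cons.injEq,
          and_true] at hmem'
        rcases hmem' with ⟨h1a, h1b⟩ | ⟨h1a, h1b⟩ <;> rw [h1a, h1b]
      have hb1' : e (2*(m:ℕ)+1) < w.length := hbnd (2*(m:ℕ)+1) (by omega)
      have hb1 : e (2*(m:ℕ)) + 1 < w.length := by
        have := epair (m:ℕ) hm
        omega
      have heqw : w[e (2*(m:ℕ))]'(by omega) = w[e (2*(m:ℕ))+1]'hb1 := by
        rw [Aux.getElem_idx_congr w (epair (m:ℕ) hm).symm hb1']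
        rw [pget (2*(m:ℕ)) (by omega), pget (2*(m:ℕ)+1) (by omega)]
        exact hpe
      obtain ⟨j, hj, t, ht2, hq, hmemW⟩ := classify (e (2*(m:ℕ))) hb1 heqw
      refine ⟨⟨j, hj⟩, t, ht2, hq, ?_⟩
      rw [take2]
      have v1 := pget (2*(m:ℕ)) (by omega)
      have v2 : w[e (2*(m:ℕ))+1]'hb1 = p[2*(m:ℕ)+1]'(by omega) := by
        rw [Aux.getElem_idx_congr w (epair (m:ℕ) hm).symm hb1']
        exact pget (2*(m:ℕ)+1) (by omega)
      rw [← v1, ← v2]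
      exact hmemW
    choose jj tt htle heq2 hmemW using H
    have estep : ∀ m, m + 1 < k → e (2*m) + 5 ≤ e (2*m+2) := by
      intro m hm
      have h := (hgap (2*m+1) (by omega)).1
      have h0 : (2*m+1) % 2 = 1 := by omega
      rw [show 2*m+1+1 = 2*m+2 from by omega] at h
      simp only [h0] at h
      norm_num at h
      have h2 := hmono (2*m+1) (2*m+2) (by omega) (by omega)
      have h3 := epair m (by omega)
      omega
    have jmono : ∀ (m₁ m₂ : Fin k), (m₁:ℕ) + 1 = (m₂:ℕ) → (jj m₁ : ℕ) < jj m₂ := by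
      intro m₁ m₂ h12
      by_contra hcon
      have hs : Aux.psum cs (jj m₂ : ℕ) ≤ Aux.psum cs (jj m₁ : ℕ) :=
        Aux.psum_mono cs (by omega)
      have h1 := heq2 m₁
      have h2 := heq2 m₂
      have h3 := estep (m₁:ℕ) (by omega)
      have h4 := htle m₁
      have h5 := htle m₂
      rw [show (2*(m₂:ℕ)) = 2*(m₁:ℕ)+2 by omega] at h2
      omega
    have low : ∀ i (hi : i < k), i ≤ (jj ⟨i, hi⟩ : ℕ) := by
      intro i
      induction i with
      | zero => intro hi; exact Nat.zero_le _
      | succ n ih =>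
        intro hi
        have h1 := ih (by omega)
        have h2 := jmono ⟨n, by omega⟩ ⟨n+1, hi⟩ rfl
        omega
    have high : ∀ d i (hi : i < k), i + d + 1 = k → (jj ⟨i, hi⟩ : ℕ) ≤ i := by
      intro d
      induction d with
      | zero =>
        intro i hi hik
        have := (jj ⟨i, hi⟩).2
        omega
      | succ d ih =>
        intro i hi hik
        have h2 := jmono ⟨i, hi⟩ ⟨i+1, by omega⟩ rfl
        have h3 := ih (i+1) (by omega) (by omega)
        omega
    have jeq : ∀ m : Fin k, jj m = m := by
      intro m
      have h1 := low (m:ℕ) m.2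
      have h2 := high (k - (m:ℕ) - 1) (m:ℕ) m.2 (by omega)
      have h3 : (⟨(m:ℕ), m.2⟩ : Fin k) = m := rfl
      rw [h3] at h1 h2
      exact Fin.ext (by omega)
    refine ⟨fun m => (p.drop (2*(m:ℕ))).take 2, ?_, ?_⟩
    · intro m
      have := hmemW m
      rwa [jeq m] at this
    · have hu2 : ∀ m : Fin k, ((p.drop (2*(m:ℕ))).take 2).length = 2 := by
        intro m
        have := hpairs m
        rcases this with h | h <;> rw [h] <;> rfl
      refine List.ext_getElem ?_ ?_
      · rw [hplen, Aux.length_flatten_ofFn_two _ hu2]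
      · intro i h1 h2
        rw [hplen] at h1
        obtain ⟨m, r, hm, hr, rfl⟩ : ∃ m r, m < k ∧ r < 2 ∧ i = 2*m + r :=
          ⟨i/2, i % 2, by omega, by omega, by omega⟩
        rw [Aux.getElem_flatten_ofFn_two _ hu2 m r hm hr h2]
        have take2 := Aux.take2_drop p (2*m) (by omega)
        have h3 : ((p.drop (2*(⟨m, hm⟩ : Fin k):ℕ)).take 2)[r]'(by rw [hu2]; exact hr) =
            ([p[2*m]'(by omega), p[2*m+1]'(by omega)] : List Bool)[r]'(by simpa using hr) := by
          simp only [take2]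
        rw [h3]
        rcases (show r = 0 ∨ r = 1 by omega) with rfl | rfl <;> rfl
  · rintro ⟨u, hu, rfl⟩
    have hu2 : ∀ j : Fin k, (u j).length = 2 ∧ (u j = [false, false] ∨ u j = [true, true]) := by
      intro j
      have h := hu j
      rcases hws j with ⟨hW, _⟩ | ⟨hW, _⟩ | ⟨hW, _⟩ <;> rw [hW] at h <;>
        simp only [Set.mem_singleton_iff, Set.mem_insert_iff] at h
      · exact ⟨by rw [h]; rfl, Or.inl h⟩
      · exact ⟨by rw [h]; rfl, Or.inr h⟩
      · rcases h with h | h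
        · exact ⟨by rw [h]; rfl, Or.inl h⟩
        · exact ⟨by rw [h]; rfl, Or.inr h⟩
    have hulen : ∀ j : Fin k, (u j).length = 2 := fun j => (hu2 j).1
    have hplen : (List.ofFn u).flatten.length = 2 * k := Aux.length_flatten_ofFn_two u hulen
    set off : ℕ → ℕ := fun j =>
      if h : j < k then (if u ⟨j, h⟩ = [true, true] then (ws ⟨j, h⟩).length - 3 else 0) else 0
      with hoffdef
    have hoffkey : ∀ (j : ℕ) (hj : j < k),
        off j + 2 ≤ (ws ⟨j, hj⟩).length ∧ off j ≤ 2 ∧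
        ∀ r, (hr : r < 2) → ∀ (hb : off j + r < (ws ⟨j, hj⟩).length),
          (ws ⟨j, hj⟩)[off j + r]'hb = (u ⟨j, hj⟩)[r]'(by rw [hulen]; exact hr) := by
      intro j hj
      have hoff : off j = if u ⟨j, hj⟩ = [true, true] then (ws ⟨j, hj⟩).length - 3 else 0 := by
        simp only [hoffdef]
        rw [dif_pos hj]
      have h := hu ⟨j, hj⟩
      rcases hws ⟨j, hj⟩ with ⟨hW, hwsj⟩ | ⟨hW, hwsj⟩ | ⟨hW, hwsj⟩ <;> rw [hW] at h <;>
        simp only [Set.mem_singleton_iff, Set.mem_insert_iff] at h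
      · have hoffv : off j = 0 := by rw [hoff, h, hwsj]; norm_num
        refine ⟨by simp [hwsj, hoffv], by omega, ?_⟩
        intro r hr hb
        rcases (show r = 0 ∨ r = 1 by omega) with rfl | rfl <;> simp [hoffv, hwsj, h]
      · have hoffv : off j = 1 := by rw [hoff, h, hwsj]; norm_num
        refine ⟨by rw [hwsj, hoffv]; norm_num, by omega, ?_⟩
        intro r hr hb
        rcases (show r = 0 ∨ r = 1 by omega) with rfl | rfl <;> simp [hoffv, hwsj, h]
      · rcases h with h | h
        · have hoffv : off j = 0 := by rw [hoff, h, hwsj]; norm_num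
          refine ⟨by rw [hwsj, hoffv]; norm_num, by omega, ?_⟩
          intro r hr hb
          rcases (show r = 0 ∨ r = 1 by omega) with rfl | rfl <;> simp [hoffv, hwsj, h]
        · have hoffv : off j = 2 := by rw [hoff, h, hwsj]; norm_num
          refine ⟨by rw [hwsj, hoffv]; norm_num, by omega, ?_⟩
          intro r hr hb
          rcases (show r = 0 ∨ r = 1 by omega) with rfl | rfl <;> simp [hoffv, hwsj, h]
    have hEb : ∀ (m : ℕ) (hm : m < k) (r : ℕ), r < 2 →
        Aux.psum cs m + (off m + r) < w.length := by
      intro m hm r hr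
      have h1 := hblock m hm
      have h2 := (hoffkey m hm).1
      omega
    have adj : ∀ t, t + 1 < 2*k →
        Aux.psum cs (t/2) + (off (t/2) + t % 2) <
          Aux.psum cs ((t+1)/2) + (off ((t+1)/2) + (t+1) % 2) := by
      intro t ht
      obtain ⟨m, r, hm, hr, rfl⟩ : ∃ m r, m < k ∧ r < 2 ∧ t = 2*m + r :=
        ⟨t/2, t % 2, by omega, by omega, by omega⟩
      rcases (show r = 0 ∨ r = 1 by omega) with rfl | rfl
      · rw [show (2*m+0)/2 = m by omega, show (2*m+0) % 2 = 0 by omega,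
          show (2*m+0+1)/2 = m by omega, show (2*m+0+1) % 2 = 1 by omega]
        omega
      · have hm1 : m + 1 < k := by omega
        rw [show (2*m+1)/2 = m by omega, show (2*m+1) % 2 = 1 by omega,
          show (2*m+1+1)/2 = m+1 by omega, show (2*m+1+1) % 2 = 0 by omega]
        have h1 := hssucc m (by omega)
        have h2 := (hoffkey m (by omega)).1
        omega
    refine ⟨hplen, ⟨fun i => Aux.psum cs (i/2) + (off (i/2) + i % 2), ?_, ?_, ?_, ?_⟩, ?_⟩
    · -- strict mono
      have mono : ∀ i', i' < 2*k → ∀ i, i < i' →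
          Aux.psum cs (i/2) + (off (i/2) + i % 2) <
            Aux.psum cs (i'/2) + (off (i'/2) + i' % 2) := by
        intro i'
        induction i' with
        | zero => intro _ i h; omega
        | succ n ih =>
          intro hn i h
          rcases Nat.lt_or_ge i n with h2 | h2
          · exact (ih (by omega) i h2).trans (adj n (by omega))
          · have : i = n := by omega
            subst this
            exact adj i (by omega)
      intro i i' hii' hi'
      rw [hplen] at hi'
      exact mono i' hi' i hii'
    · -- bounds
      intro i hi
      rw [hplen] at hi
      obtain ⟨m, r, hm, hr, rfl⟩ : ∃ m r, m < k ∧ r < 2 ∧ i = 2*m + r :=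
        ⟨i/2, i % 2, by omega, by omega, by omega⟩
      beta_reduce
      rw [show (2*m+r)/2 = m by omega, show (2*m+r) % 2 = r by omega]
      exact hEb m hm r hr
    · -- values
      intro i hi
      rw [hplen] at hi
      obtain ⟨m, r, hm, hr, rfl⟩ : ∃ m r, m < k ∧ r < 2 ∧ i = 2*m + r :=
        ⟨i/2, i % 2, by omega, by omega, by omega⟩
      beta_reduce
      rw [show (2*m+r)/2 = m by omega, show (2*m+r) % 2 = r by omega]
      have hb := hEb m hm r hr
      rw [List.getElem?_eq_getElem hb, List.getElem?_eq_getElem (by rw [hplen]; omega)]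
      rw [Option.some_inj]
      rw [hchunk m hm (off m + r) (by have := (hoffkey m hm).1; omega) hb]
      rw [List.getElem_append_left (by have := (hoffkey m hm).1; omega)]
      rw [(hoffkey m hm).2.2 r hr (by have := (hoffkey m hm).1; omega)]
      rw [Aux.getElem_flatten_ofFn_two u hulen m r hm hr (by rw [hplen]; omega)]
    · -- gaps
      intro i hi
      rw [hplen] at hi
      obtain ⟨m, r, hm, hr, rfl⟩ : ∃ m r, m < k ∧ r < 2 ∧ i = 2*m + r :=
        ⟨i/2, i % 2, by omega, by omega, by omega⟩
      rcases (show r = 0 ∨ r = 1 by omega) with rfl | rfl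
      · beta_reduce
        rw [show ((2*m+0) % 2) = 0 by omega, show (2*m+0)/2 = m by omega,
          show (2*m+0+1)/2 = m by omega, show (2*m+0+1) % 2 = 1 by omega]
        norm_num
        omega
      · have hm1 : m + 1 < k := by omega
        beta_reduce
        rw [show ((2*m+1) % 2) = 1 by omega, show (2*m+1)/2 = m by omega,
          show (2*m+1+1)/2 = m+1 by omega, show (2*m+1+1) % 2 = 0 by omega]
        norm_num
        have h1 := hssucc m (by omega)
        have h2 := (hoffkey m (by omega)).1
        have h3 := (hoffkey m (by omega)).2.1
        have h4 := (hoffkey (m+1) hm1).1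
        have h5 := (hoffkey (m+1) hm1).2.1
        have h6 := hL ⟨m, by omega⟩
        constructor <;> omega
    · -- pairs
      intro j
      have hd := Aux.drop_psum' (List.ofFn u) (j:ℕ) (by simp [j.2])
      rw [Aux.psum_ofFn_two u hulen (j:ℕ) (by omega)] at hd
      rw [hd]
      rw [List.take_left' (by simp [hulen])]
      rcases (hu2 j).2 with h | h <;> simp [h]
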